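/- Define, for f ∈ (−1, 1), γ(f) = −3f/(2 + √(4 − 3f²)), χ(f) = (1 + 3γ(f)²)/(3 + γ(f)²) and η(f) = 8γ(f)²/(3(3 − γ(f)²)). Then χ is differentiable on (−1, 1) and the identity η(f) = 1/3 + f·χ'(f) − χ(f) holds for every f ∈ (−1, 1). -/

import Mathlib

/-- The auxiliary variable `γ(f) = −3f/(2 + √(4 − 3f²))` of the slab-geometry `M₁`
closure. -/
noncomputable def gammaM1 (f : ℝ) : ℝ := -3 * f / (2 + Real.sqrt (4 - 3 * f ^ 2))

/-- The Eddington factor `χ(f) = (1 + 3γ(f)²)/(3 + γ(f)²)`. -/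
noncomputable def chiM1 (f : ℝ) : ℝ := (1 + 3 * (gammaM1 f) ^ 2) / (3 + (gammaM1 f) ^ 2)

/-- The convective correction coefficient `η(f) = 8γ(f)²/(3(3 − γ(f)²))`. -/
noncomputable def etaM1 (f : ℝ) : ℝ := 8 * (gammaM1 f) ^ 2 / (3 * (3 - (gammaM1 f) ^ 2))

private lemma chiM1_eq (f : ℝ) (hf : f ∈ Set.Ioo (-1 : ℝ) 1) :
    chiM1 f = (5 - 2 * Real.sqrt (4 - 3 * f ^ 2)) / 3 := by
  obtain ⟨h1, h2⟩ := hf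
  set s := Real.sqrt (4 - 3 * f ^ 2) with hs
  have hnn : (0:ℝ) ≤ 4 - 3 * f ^ 2 := by nlinarith
  have hs2 : s ^ 2 = 4 - 3 * f ^ 2 := Real.sq_sqrt hnn
  have hspos : 0 < s := Real.sqrt_pos.mpr (by nlinarith)
  have h2s : (2 : ℝ) + s ≠ 0 := by positivity
  have hden : 3 + (gammaM1 f) ^ 2 ≠ 0 := by positivity
  unfold chiM1 gammaM1
  rw [← hs]
  field_simp
  nlinarith [sq_nonneg (2 + s), hs2, hspos]

/-- The Eddington factor `χ` is differentiable on `(−1, 1)` and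
`η(f) = 1/3 + f·χ'(f) − χ(f)` for every `f ∈ (−1, 1)`. -/
theorem etaM1_eq_third_add_mul_deriv_chi_sub_chi :
    ∀ f : ℝ, f ∈ Set.Ioo (-1 : ℝ) 1 →
      DifferentiableAt ℝ chiM1 f ∧
      etaM1 f = 1 / 3 + f * deriv chiM1 f - chiM1 f := by
  intro f hf
  obtain ⟨h1, h2⟩ := hf
  set s := Real.sqrt (4 - 3 * f ^ 2) with hs
  have hnn : (0:ℝ) ≤ 4 - 3 * f ^ 2 := by nlinarith
  have hs2 : s ^ 2 = 4 - 3 * f ^ 2 := Real.sq_sqrt hnn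
  have hspos : 0 < s := Real.sqrt_pos.mpr (by nlinarith)
  have hne : (4 : ℝ) - 3 * f ^ 2 ≠ 0 := by nlinarith
  -- derivative of the simplified form
  have hinner : HasDerivAt (fun x : ℝ => 4 - 3 * x ^ 2) (-(6 * f)) f := by
    have h := ((hasDerivAt_pow 2 f).const_mul (3:ℝ)).const_sub 4
    exact h.congr_deriv (by ring)
  have hsqrt : HasDerivAt (fun x : ℝ => Real.sqrt (4 - 3 * x ^ 2))
      (-(6 * f) / (2 * s)) f := hinner.sqrt hne
  have hg : HasDerivAt (fun x : ℝ => (5 - 2 * Real.sqrt (4 - 3 * x ^ 2)) / 3)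
      ((0 - 2 * (-(6 * f) / (2 * s))) / 3) f := by
    exact (((hasDerivAt_const f (5:ℝ)).sub ((hsqrt.const_mul 2))).div_const 3)
  have hEq : chiM1 =ᶠ[nhds f] (fun x : ℝ => (5 - 2 * Real.sqrt (4 - 3 * x ^ 2)) / 3) := by
    have hopen : Set.Ioo (-1 : ℝ) 1 ∈ nhds f := isOpen_Ioo.mem_nhds ⟨h1, h2⟩
    filter_upwards [hopen] with x hx
    exact chiM1_eq x hx
  have hchi : HasDerivAt chiM1 ((0 - 2 * (-(6 * f) / (2 * s))) / 3) f :=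
    hg.congr_of_eventuallyEq hEq
  refine ⟨hchi.differentiableAt, ?_⟩
  rw [hchi.deriv, chiM1_eq f ⟨h1, h2⟩, ← hs]
  have h2s : (2 : ℝ) + s ≠ 0 := by positivity
  have hg2 : (gammaM1 f) ^ 2 = 3 * (2 - s) / (2 + s) := by
    unfold gammaM1
    rw [← hs]
    field_simp
    nlinarith [hs2]
  have hden : (3 : ℝ) - 3 * (2 - s) / (2 + s) = 6 * s / (2 + s) := by
    field_simp; ring
  have hsne : s ≠ 0 := ne_of_gt hspos
  unfold etaM1
  rw [hg2, hden]
  field_simp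
  nlinarith [hs2, hspos]
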